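/- Reversal preserves bal-decomposability: if (s₀, s₁) is a proper factorisation of a balanced string over Σ₂ that admits a bal-decomposition, then (s₀, s₁ᴿ) — with the second component reversed — also concatenates to a balanced string and admits a bal-decomposition (after reversing the corresponding factors). -/

import Mathlib

/-- A letter of the alphabet Σₙ: the `i`-th pair, with `true` for `aᵢ`
and `false` for its conjugate `āᵢ`. -/
abbrev Letter (n : ℕ) := Fin n × Bool

/-- A string (word) over Σₙ. -/
abbrev Word (n : ℕ) := List (Letter n)

/-- The conjugate letter. -/
def conj {n : ℕ} (x : Letter n) : Letter n := (x.1, !x.2)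

/-- The balance map μ : Σₙ* → ℤⁿ. -/
def mu {n : ℕ} (w : Word n) : Fin n → ℤ :=
  fun i => (w.count ((i, true) : Letter n) : ℤ) - (w.count ((i, false) : Letter n) : ℤ)

/-- The n-balanced language Oₙ. -/
def OO (n : ℕ) : Set (Word n) :=
  {w | ∀ i : Fin n, w.count ((i, true) : Letter n) = w.count ((i, false) : Letter n)}

/-- A string is short if no conjugate pair of letters both occur in it. -/
def Short {n : ℕ} (w : Word n) : Prop :=
  ∀ i : Fin n, ¬ (((i, true) : Letter n) ∈ w ∧ ((i, false) : Letter n) ∈ w)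

/-- The factor of `p` with indices from `i` to `j` (inclusive). -/
def factor {n : ℕ} (p : Word n) (i j : ℕ) : Word n :=
  (p.drop i).take (j + 1 - i)

/-- `[i, j]` is a bump of `p`: the factor `p[i..j]` is a minimal non-short factor,
i.e. it is not short but all of its ultra-proper factors are short. -/
def IsBump {n : ℕ} (p : Word n) (i j : ℕ) : Prop :=
  i < j ∧ j < p.length ∧ ¬ Short (factor p i j) ∧
    ∀ u l r : Word n, factor p i j = l ++ u ++ r → u ≠ [] → u ≠ factor p i j → Short u

/-- Bal-decomposition of a pair `(z₀, z₁)`: choose proper factorisations of `z₀` and `z₁`,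
and partition all resulting factors into two nonempty lists of length at most 2, each
concatenating to a string of O₂ of length strictly less than `|z₀z₁|`. -/
def BalDecomp (z₀ z₁ : Word 2) : Prop :=
  ∃ f₀ f₁ P Q : List (Word 2),
    f₀.flatten = z₀ ∧ [] ∉ f₀ ∧ f₁.flatten = z₁ ∧ [] ∉ f₁ ∧
    (P ++ Q).Perm (f₀ ++ f₁) ∧
    0 < P.length ∧ P.length ≤ 2 ∧ 0 < Q.length ∧ Q.length ≤ 2 ∧
    P.flatten.length < z₀.length + z₁.length ∧ Q.flatten.length < z₀.length + z₁.length ∧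
    P.flatten ∈ OO 2 ∧ Q.flatten ∈ OO 2


/-- Sum of an `f` invariant under reverse over `toList ++ map reverse toList`. -/
lemma sum_helper (f : Word 2 → ℕ) (hf : ∀ w : Word 2, f w.reverse = f w)
    (u v : Multiset (Word 2)) :
    ((u.toList ++ v.toList.map List.reverse).map f).sum = ((u + v).map f).sum := by
  have h1 : ∀ (m : Multiset (Word 2)) (g : Word 2 → ℕ),
      (m.toList.map g).sum = (m.map g).sum := by
    intro m g
    conv_rhs => rw [← m.coe_toList, Multiset.map_coe, Multiset.sum_coe]
  have hcomp : f ∘ List.reverse = f := funext hf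
  rw [List.map_append, List.sum_append, List.map_map, hcomp,
    Multiset.map_add, Multiset.sum_add, h1, h1]

theorem stmt_18 (s₀ s₁ : Word 2) (h₀ : s₀ ≠ []) (h₁ : s₁ ≠ [])
    (hbal : s₀ ++ s₁ ∈ OO 2) (hbd : BalDecomp s₀ s₁) :
    s₀ ++ s₁.reverse ∈ OO 2 ∧ BalDecomp s₀ s₁.reverse := by
  have hrev : ∀ (x : Letter 2) (w : Word 2), (s₀ ++ w.reverse).count x = (s₀ ++ w).count x := by
    intro x w; simp [List.count_append, List.count_reverse]
  constructor
  · intro i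
    have h := hbal i
    simpa [List.count_append, List.count_reverse] using h
  obtain ⟨f₀, f₁, P, Q, hf₀, hn₀, hf₁, hn₁, hperm, hP1, hP2, hQ1, hQ2, hPl, hQl, hPO, hQO⟩ := hbd
  classical
  have hm : (↑P + ↑Q : Multiset (Word 2)) = ↑f₀ + ↑f₁ := by
    have := Multiset.coe_eq_coe.2 hperm
    simpa using this
  set a : Multiset (Word 2) := ↑P ∩ ↑f₀ with ha
  set b : Multiset (Word 2) := ↑P - a with hb
  set c : Multiset (Word 2) := ↑f₀ - a with hc
  set d : Multiset (Word 2) := ↑f₁ - b with hd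
  have hcount : ∀ x : Word 2, Multiset.count x (↑P : Multiset (Word 2)) + Multiset.count x (↑Q : Multiset (Word 2)) = Multiset.count x (↑f₀ : Multiset (Word 2)) + Multiset.count x (↑f₁ : Multiset (Word 2)) := by
    intro x
    have := congrArg (Multiset.count x) hm
    simpa [Multiset.count_add] using this
  have hPab : (↑P : Multiset (Word 2)) = a + b := by
    ext x
    simp only [ha, hb, Multiset.count_add, Multiset.count_sub, Multiset.count_inter]
    omega
  have hXac : (↑f₀ : Multiset (Word 2)) = a + c := by
    ext x
    simp only [ha, hc, Multiset.count_add, Multiset.count_sub, Multiset.count_inter]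
    omega
  have hYbd : (↑f₁ : Multiset (Word 2)) = b + d := by
    ext x
    have := hcount x
    simp only [ha, hb, hd, Multiset.count_add, Multiset.count_sub, Multiset.count_inter]
    omega
  have hQcd : (↑Q : Multiset (Word 2)) = c + d := by
    ext x
    have := hcount x
    simp only [ha, hb, hc, hd, Multiset.count_add, Multiset.count_sub, Multiset.count_inter] at *
    omega
  refine ⟨f₀, (f₁.map List.reverse).reverse,
    a.toList ++ b.toList.map List.reverse,
    c.toList ++ d.toList.map List.reverse,
    hf₀, hn₀, ?_, ?_, ?_, ?_, ?_, ?_, ?_, ?_, ?_, ?_, ?_⟩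
  · rw [← List.reverse_flatten, hf₁]
  · simp only [List.mem_reverse, List.mem_map]
    rintro ⟨w, hw, hwr⟩
    exact hn₁ (List.reverse_eq_nil_iff.1 hwr ▸ hw)
  · rw [← Multiset.coe_eq_coe]
    simp only [← Multiset.coe_add, Multiset.coe_reverse, ← Multiset.map_coe,
      Multiset.coe_toList]
    rw [hXac, hYbd, Multiset.map_add]
    abel
  · simp only [List.length_append, List.length_map, Multiset.length_toList]
    have : Multiset.card a + Multiset.card b = P.length := by
      rw [← Multiset.card_add, ← hPab, Multiset.coe_card]
    omega
  · simp only [List.length_append, List.length_map, Multiset.length_toList]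
    have : Multiset.card a + Multiset.card b = P.length := by
      rw [← Multiset.card_add, ← hPab, Multiset.coe_card]
    omega
  · simp only [List.length_append, List.length_map, Multiset.length_toList]
    have : Multiset.card c + Multiset.card d = Q.length := by
      rw [← Multiset.card_add, ← hQcd, Multiset.coe_card]
    omega
  · simp only [List.length_append, List.length_map, Multiset.length_toList]
    have : Multiset.card c + Multiset.card d = Q.length := by
      rw [← Multiset.card_add, ← hQcd, Multiset.coe_card]
    omega
  · rw [List.length_flatten, sum_helper List.length (fun w => List.length_reverse) a b,
      ← hPab, Multiset.map_coe, Multiset.sum_coe, ← List.length_flatten, List.length_reverse]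
    exact hPl
  · rw [List.length_flatten, sum_helper List.length (fun w => List.length_reverse) c d,
      ← hQcd, Multiset.map_coe, Multiset.sum_coe, ← List.length_flatten, List.length_reverse]
    exact hQl
  · intro i
    rw [List.count_flatten, List.count_flatten,
      sum_helper (List.count ((i, true) : Letter 2)) (fun w => List.count_reverse) a b,
      sum_helper (List.count ((i, false) : Letter 2)) (fun w => List.count_reverse) a b,
      ← hPab, Multiset.map_coe, Multiset.sum_coe, Multiset.map_coe, Multiset.sum_coe,
      ← List.count_flatten, ← List.count_flatten]
    exact hPO i
  · intro i
    rw [List.count_flatten, List.count_flatten,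
      sum_helper (List.count ((i, true) : Letter 2)) (fun w => List.count_reverse) c d,
      sum_helper (List.count ((i, false) : Letter 2)) (fun w => List.count_reverse) c d,
      ← hQcd, Multiset.map_coe, Multiset.sum_coe, Multiset.map_coe, Multiset.sum_coe,
      ← List.count_flatten, ← List.count_flatten]
    exact hQO i
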